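/- Let α > k ≥ 1 be real numbers and C > 0. Let (z_i) be a sequence of reals with z_1 ≥ 1 satisfying z_{i+1} ≥ z_i + C·z_i^{k/α} for all i ≥ 1. Then there exists D > 0 (depending only on C, k, α) such that z_i ≥ D·i^{α/(α−k)} for all i ≥ 1. -/

import Mathlib

open Real

/-- MVT estimate: for `x ≥ 1` and `β ≥ 1`, `(x+1)^β ≤ x^β + β * 2^(β-1) * x^(β-1)`. -/
lemma rpow_succ_le_aux (β : ℝ) (hβ : 1 ≤ β) (x : ℝ) (hx : 1 ≤ x) :
    (x + 1) ^ β ≤ x ^ β + β * 2 ^ (β - 1) * x ^ (β - 1) := by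
  have hx0 : 0 < x := by linarith
  have hlt : x < x + 1 := by linarith
  obtain ⟨c, hc, hderiv⟩ := exists_hasDerivAt_eq_slope (fun y => y ^ β)
    (fun y => β * y ^ (β - 1)) hlt
    (ContinuousOn.mono (fun y _ => (Real.continuousAt_rpow_const y β
      (Or.inr (by linarith))).continuousWithinAt) (fun y hy => Set.mem_univ y))
    (fun y _ => Real.hasDerivAt_rpow_const (Or.inr hβ))
  have hc1 : x < c := hc.1
  have hc2 : c < x + 1 := hc.2
  have hc0 : 0 ≤ c := by linarith
  have hslope : (x + 1) ^ β - x ^ β = β * c ^ (β - 1) := by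
    have : ((x + 1) ^ β - x ^ β) / (x + 1 - x) = β * c ^ (β - 1) := hderiv.symm
    rw [show x + 1 - x = 1 by ring, div_one] at this
    exact this
  have hc2x : c ≤ 2 * x := by linarith
  have hbound : c ^ (β - 1) ≤ 2 ^ (β - 1) * x ^ (β - 1) := by
    calc c ^ (β - 1) ≤ (2 * x) ^ (β - 1) :=
          Real.rpow_le_rpow hc0 hc2x (by linarith)
      _ = 2 ^ (β - 1) * x ^ (β - 1) := Real.mul_rpow (by norm_num) hx0.le
  have hβ0 : 0 ≤ β := by linarith
  nlinarith [mul_le_mul_of_nonneg_left hbound hβ0]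

theorem polynomial_lower_bound_of_recursion (k α C : ℝ) (hk : 1 ≤ k) (hkα : k < α)
    (hC : 0 < C) (z : ℕ → ℝ) (h1 : 1 ≤ z 1)
    (hrec : ∀ i : ℕ, 1 ≤ i → z i + C * z i ^ (k / α) ≤ z (i + 1)) :
    ∃ D : ℝ, 0 < D ∧ ∀ i : ℕ, 1 ≤ i → D * (i : ℝ) ^ (α / (α - k)) ≤ z i := by
  have hα : 0 < α := by linarith
  have hαk : 0 < α - k := by linarith
  set β : ℝ := α / (α - k) with hβdef
  have hβ1 : 1 < β := (one_lt_div hαk).mpr (by linarith)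
  have hβ0 : 0 < β := by linarith
  have h2pos : (0:ℝ) < 2 ^ (β - 1) := Real.rpow_pos_of_pos two_pos _
  set M : ℝ := C / (β * 2 ^ (β - 1)) with hMdef
  have hM0 : 0 < M := div_pos hC (mul_pos hβ0 h2pos)
  set D : ℝ := min 1 (M ^ β) with hDdef
  have hD0 : 0 < D := lt_min one_pos (Real.rpow_pos_of_pos hM0 _)
  have hD1 : D ≤ 1 := min_le_left _ _
  have hβe : β * ((α - k) / α) = 1 := by rw [hβdef]; field_simp
  have hβk : β * (k / α) = β - 1 := by rw [hβdef]; field_simp; ring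
  have hesum : (α - k) / α + k / α = 1 := by field_simp; ring
  have hkα0 : 0 ≤ k / α := div_nonneg (by linarith) hα.le
  have hDe : D ^ ((α - k) / α) ≤ M := by
    rcases le_total (M ^ β) 1 with h | h
    · rw [hDdef, min_eq_right h, ← Real.rpow_mul hM0.le, hβe, Real.rpow_one]
    · have hM1 : 1 ≤ M := by
        by_contra hM1
        push_neg at hM1
        have := Real.rpow_lt_one hM0.le hM1 hβ0
        linarith
      rw [hDdef, min_eq_left h, Real.one_rpow]
      exact hM1
  -- key constant inequality: D * β * 2^(β-1) ≤ C * D^(k/α)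
  have hkey : D * (β * 2 ^ (β - 1)) ≤ C * D ^ (k / α) := by
    have hsplit : D = D ^ ((α - k) / α) * D ^ (k / α) := by
      rw [← Real.rpow_add hD0, hesum, Real.rpow_one]
    have hDk0 : 0 < D ^ (k / α) := Real.rpow_pos_of_pos hD0 _
    calc D * (β * 2 ^ (β - 1)) = D ^ ((α - k) / α) * D ^ (k / α) * (β * 2 ^ (β - 1)) := by
          rw [← hsplit]
      _ ≤ M * D ^ (k / α) * (β * 2 ^ (β - 1)) := by
          apply mul_le_mul_of_nonneg_right
          · exact mul_le_mul_of_nonneg_right hDe hDk0.le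
          · positivity
      _ = C * D ^ (k / α) := by
          rw [hMdef]
          field_simp
  refine ⟨D, hD0, ?_⟩
  intro i hi
  induction i, hi using Nat.le_induction with
  | base => simpa using le_trans hD1 h1
  | succ i hi ih =>
    have hn1 : (1:ℝ) ≤ (i:ℝ) := by exact_mod_cast hi
    set n : ℝ := (i:ℝ) with hndef
    have hn0 : 0 < n := by linarith
    have hDn0 : 0 < D * n ^ β := mul_pos hD0 (Real.rpow_pos_of_pos hn0 _)
    have hz1 : D * n ^ β + C * (D * n ^ β) ^ (k / α) ≤ z (i + 1) := by
      refine le_trans ?_ (hrec i hi)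
      have h2 : (D * n ^ β) ^ (k / α) ≤ z i ^ (k / α) :=
        Real.rpow_le_rpow hDn0.le ih hkα0
      nlinarith
    have hpow : (D * n ^ β) ^ (k / α) = D ^ (k / α) * n ^ (β - 1) := by
      rw [Real.mul_rpow hD0.le (Real.rpow_pos_of_pos hn0 _).le,
        ← Real.rpow_mul hn0.le, hβk]
    have haux := rpow_succ_le_aux β hβ1.le n hn1
    have hn10 : 0 ≤ n ^ (β - 1) := (Real.rpow_pos_of_pos hn0 _).le
    have hfin : D * (n + 1) ^ β ≤ z (i + 1) := by
      calc D * (n + 1) ^ β ≤ D * (n ^ β + β * 2 ^ (β - 1) * n ^ (β - 1)) :=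
            mul_le_mul_of_nonneg_left haux hD0.le
        _ = D * n ^ β + D * (β * 2 ^ (β - 1)) * n ^ (β - 1) := by ring
        _ ≤ D * n ^ β + C * D ^ (k / α) * n ^ (β - 1) := by nlinarith
        _ = D * n ^ β + C * (D * n ^ β) ^ (k / α) := by rw [hpow]; ring
        _ ≤ z (i + 1) := hz1
    have : ((i + 1 : ℕ) : ℝ) = n + 1 := by push_cast; ring
    rw [this]
    exact hfin
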